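/- For any r > 0 and any closed, convex, origin-symmetric set A ⊆ ℝⁿ, μₙ(A ∩ r·B₂ⁿ) ≥ μₙ(A)·μₙ(r·B₂ⁿ). -/

import Mathlib

open MeasureTheory Real Pointwise
noncomputable def stdGaussian (n : ℕ) : Measure (EuclideanSpace ℝ (Fin n)) :=
  volume.withDensity fun x => ENNReal.ofReal ((2 * π) ^ (-(n : ℝ) / 2) * Real.exp (-‖x‖ ^ 2 / 2))

open Set Metric

noncomputable def gweight (n : ℕ) (t : ℝ) : ENNReal :=
  ENNReal.ofReal ((2 * π) ^ (-(n : ℝ) / 2) * Real.exp (-t ^ 2 / 2))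

lemma measurable_gweight (n : ℕ) : Measurable (gweight n) := by
  apply Measurable.ennreal_ofReal
  fun_prop

lemma stdGaussian_polar (n : ℕ) (hn : n ≠ 0) (S : Set (EuclideanSpace ℝ (Fin n)))
    (hS : MeasurableSet S) :
    (volume.withDensity fun x : EuclideanSpace ℝ (Fin n) => gweight n ‖x‖) S =
      ∫⁻ s : Set.Ioi (0:ℝ),
        ((volume : Measure (EuclideanSpace ℝ (Fin n))).toSphere
          ((fun θ : sphere (0 : EuclideanSpace ℝ (Fin n)) 1 =>
            (s : ℝ) • (θ : EuclideanSpace ℝ (Fin n))) ⁻¹' S)) * gweight n (s : ℝ)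
        ∂(Measure.volumeIoiPow (Module.finrank ℝ (EuclideanSpace ℝ (Fin n)) - 1)) := by
  haveI : Nonempty (Fin n) := ⟨⟨0, Nat.pos_of_ne_zero hn⟩⟩
  haveI : Nontrivial (EuclideanSpace ℝ (Fin n)) := inferInstance
  set Fe : (EuclideanSpace ℝ (Fin n)) → ENNReal := fun y => S.indicator (fun y => gweight n ‖y‖) y with hFe
  have hFem : Measurable Fe := (measurable_gweight n).comp measurable_norm |>.indicator hS
  have step1 : (volume.withDensity fun x : (EuclideanSpace ℝ (Fin n)) => gweight n ‖x‖) S = ∫⁻ x, Fe x := by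
    rw [withDensity_apply _ hS, ← lintegral_indicator hS]
  have step2 : ∫⁻ x, Fe x = ∫⁻ y : ↥(({0} : Set (EuclideanSpace ℝ (Fin n)))ᶜ), Fe y ∂(volume.comap Subtype.val) := by
    rw [lintegral_subtype_comap (measurableSet_singleton _).compl,
      restrict_compl_singleton]
  set Φ := homeomorphUnitSphereProd (EuclideanSpace ℝ (Fin n))
  have hmp := (volume : Measure (EuclideanSpace ℝ (Fin n))).measurePreserving_homeomorphUnitSphereProd
  set f : sphere (0 : (EuclideanSpace ℝ (Fin n))) 1 × Set.Ioi (0:ℝ) → ENNReal := fun p => Fe ((Φ.symm p : (EuclideanSpace ℝ (Fin n)))) with hf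
  have hfm : Measurable f :=
    hFem.comp (continuous_subtype_val.comp Φ.symm.continuous).measurable
  have step3 : ∫⁻ y : ↥(({0} : Set (EuclideanSpace ℝ (Fin n)))ᶜ), Fe y ∂(volume.comap Subtype.val)
      = ∫⁻ p, f p ∂((volume : Measure (EuclideanSpace ℝ (Fin n))).toSphere.prod
          (Measure.volumeIoiPow (Module.finrank ℝ (EuclideanSpace ℝ (Fin n)) - 1))) := by
    rw [← hmp.lintegral_comp hfm]
    refine lintegral_congr fun y => ?_
    simp only [f, Φ, Homeomorph.symm_apply_apply]
  have step4 : ∫⁻ p, f p ∂((volume : Measure (EuclideanSpace ℝ (Fin n))).toSphere.prod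
          (Measure.volumeIoiPow (Module.finrank ℝ (EuclideanSpace ℝ (Fin n)) - 1)))
      = ∫⁻ s : Set.Ioi (0:ℝ), ∫⁻ θ, f (θ, s) ∂(volume : Measure (EuclideanSpace ℝ (Fin n))).toSphere
          ∂(Measure.volumeIoiPow (Module.finrank ℝ (EuclideanSpace ℝ (Fin n)) - 1)) :=
    lintegral_prod_symm f hfm.aemeasurable
  rw [step1, step2, step3, step4]
  refine lintegral_congr fun s => ?_
  have hinner : ∀ θ : sphere (0 : (EuclideanSpace ℝ (Fin n))) 1, f (θ, s) =
      Set.indicator ((fun θ : sphere (0 : (EuclideanSpace ℝ (Fin n))) 1 => (s : ℝ) • (θ : EuclideanSpace ℝ (Fin n))) ⁻¹' S)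
        (fun _ => gweight n (s : ℝ)) θ := by
    intro θ
    have hn1 : ‖(s : ℝ) • (θ : EuclideanSpace ℝ (Fin n))‖ = (s : ℝ) := by
      rw [norm_smul, mem_sphere_zero_iff_norm.1 θ.2, mul_one, Real.norm_eq_abs,
        abs_of_pos s.2]
    by_cases h : (s : ℝ) • (θ : EuclideanSpace ℝ (Fin n)) ∈ S
    · simp [f, Fe, Φ, h, hn1, Set.indicator_of_mem, homeomorphUnitSphereProd_symm_apply_coe]
    · simp [f, Fe, Φ, h, Set.indicator_of_notMem, homeomorphUnitSphereProd_symm_apply_coe]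
  rw [lintegral_congr hinner, lintegral_indicator_const, mul_comm]
  exact (hS.preimage (Continuous.measurable (by fun_prop)))



lemma integrable_my_gaussian (n : ℕ) :
    Integrable (fun x : EuclideanSpace ℝ (Fin n) => rexp (-‖x‖ ^ 2 / 2)) := by
  have h := GaussianFourier.integrable_cexp_neg_mul_sq_norm_add (V := EuclideanSpace ℝ (Fin n))
    (b := (1/2 : ℂ)) (by norm_num) 0 0
  have h2 := h.re
  refine h2.congr (Filter.Eventually.of_forall fun x => ?_)
  simp only [zero_mul, add_zero]
  rw [show (-(1/2 : ℂ) * (‖x‖ : ℂ)^2 : ℂ) = ((-‖x‖^2/2 : ℝ) : ℂ) by push_cast; ring,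
    ← Complex.ofReal_exp]
  norm_cast

lemma stdGaussian_univ (n : ℕ) : stdGaussian n Set.univ = 1 := by
  rw [stdGaussian, withDensity_apply _ MeasurableSet.univ, Measure.restrict_univ]
  have hint : Integrable (fun x : EuclideanSpace ℝ (Fin n) =>
      (2 * π) ^ (-(n : ℝ) / 2) * rexp (-‖x‖ ^ 2 / 2)) :=
    (integrable_my_gaussian n).const_mul _
  rw [← ofReal_integral_eq_lintegral_ofReal hint (Filter.Eventually.of_forall fun x => by positivity)]
  rw [integral_const_mul]
  have : ∫ x : EuclideanSpace ℝ (Fin n), rexp (-‖x‖ ^ 2 / 2)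
      = (π / (1/2)) ^ ((Module.finrank ℝ (EuclideanSpace ℝ (Fin n))) / 2 : ℝ) := by
    rw [← GaussianFourier.integral_rexp_neg_mul_sq_norm (b := (1/2 : ℝ)) (by norm_num)]
    congr 1 with x
    ring_nf
  rw [this, finrank_euclideanSpace_fin]
  have hpi : (π / (1/2) : ℝ) = 2 * π := by field_simp
  rw [hpi, ← Real.rpow_add (by positivity), show (-(n:ℝ)/2 + n/2 : ℝ) = 0 by ring, Real.rpow_zero]
  simp

lemma stdGaussian_eq (n : ℕ) :
    stdGaussian n = volume.withDensity fun x : EuclideanSpace ℝ (Fin n) => gweight n ‖x‖ := rfl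

lemma preimage_smul_sphere_antitone (n : ℕ) (A : Set (EuclideanSpace ℝ (Fin n)))
    (hAco : Convex ℝ A) (h0 : (0 : EuclideanSpace ℝ (Fin n)) ∈ A)
    (s t : Set.Ioi (0:ℝ)) (hst : (s:ℝ) ≤ (t:ℝ)) :
    ((fun θ : Metric.sphere (0 : EuclideanSpace ℝ (Fin n)) 1 =>
        (t : ℝ) • (θ : EuclideanSpace ℝ (Fin n))) ⁻¹' A) ⊆
      ((fun θ : Metric.sphere (0 : EuclideanSpace ℝ (Fin n)) 1 =>
        (s : ℝ) • (θ : EuclideanSpace ℝ (Fin n))) ⁻¹' A) := by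
  intro θ hθ
  have ht0 : (0:ℝ) < (t:ℝ) := t.2
  have hs0 : (0:ℝ) < (s:ℝ) := s.2
  have heq : (s : ℝ) • (θ : EuclideanSpace ℝ (Fin n))
      = ((s:ℝ)/(t:ℝ)) • ((t : ℝ) • (θ : EuclideanSpace ℝ (Fin n))) := by
    rw [smul_smul, div_mul_cancel₀ _ ht0.ne']
  show (s : ℝ) • (θ : EuclideanSpace ℝ (Fin n)) ∈ A
  rw [heq]
  exact hAco.smul_mem_of_zero_mem h0 hθ
    ⟨div_nonneg hs0.le ht0.le, div_le_one_of_le₀ hst ht0.le⟩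

theorem stmt_7 (n : ℕ) (r : ℝ) (hr : 0 < r) (A : Set (EuclideanSpace ℝ (Fin n)))
    (hAcl : IsClosed A) (hAco : Convex ℝ A) (hAsym : ∀ x ∈ A, -x ∈ A) :
    stdGaussian n (A ∩ Metric.closedBall 0 r) ≥
      stdGaussian n A * stdGaussian n (Metric.closedBall 0 r) := by
  classical
  rcases eq_or_ne n 0 with hn | hn
  · subst hn
    have hball : Metric.closedBall (0 : EuclideanSpace ℝ (Fin 0)) r = Set.univ := by
      ext x
      simp [mem_closedBall_zero_iff, EuclideanSpace.norm_eq, hr.le]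
    rw [hball, Set.inter_univ, stdGaussian_univ, mul_one]
  rcases A.eq_empty_or_nonempty with hA | ⟨a, ha⟩
  · subst hA
    simp [stdGaussian]
  have h0 : (0 : EuclideanSpace ℝ (Fin n)) ∈ A := by
    have h := hAco ha (hAsym a ha) (by norm_num : (0:ℝ) ≤ 1/2)
      (by norm_num : (0:ℝ) ≤ 1/2) (by norm_num)
    simpa [smul_neg, ← sub_eq_add_neg, sub_self] using h
  have hSA : MeasurableSet A := hAcl.measurableSet
  have hSB : MeasurableSet (Metric.closedBall (0 : EuclideanSpace ℝ (Fin n)) r) :=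
    measurableSet_closedBall
  -- notation
  set σ := (volume : Measure (EuclideanSpace ℝ (Fin n))).toSphere with hσ
  set ν := Measure.volumeIoiPow (Module.finrank ℝ (EuclideanSpace ℝ (Fin n)) - 1) with hν
  set P : Set (EuclideanSpace ℝ (Fin n)) → Set.Ioi (0:ℝ) →
      Set (Metric.sphere (0 : EuclideanSpace ℝ (Fin n)) 1) :=
    fun S s => (fun θ : Metric.sphere (0 : EuclideanSpace ℝ (Fin n)) 1 =>
      (s : ℝ) • (θ : EuclideanSpace ℝ (Fin n))) ⁻¹' S with hP
  set g : Set.Ioi (0:ℝ) → ENNReal := fun s => gweight n (s : ℝ) with hg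
  have hgm : Measurable g := (measurable_gweight n).comp measurable_subtype_coe
  set K : Set (Set.Ioi (0:ℝ)) := Subtype.val ⁻¹' (Set.Iic r) with hK
  have hKm : MeasurableSet K := measurable_subtype_coe measurableSet_Iic
  have hnormsm : ∀ (s : Set.Ioi (0:ℝ)) (θ : Metric.sphere (0 : EuclideanSpace ℝ (Fin n)) 1),
      ‖(s : ℝ) • (θ : EuclideanSpace ℝ (Fin n))‖ = (s : ℝ) := by
    intro s θ
    rw [norm_smul, mem_sphere_zero_iff_norm.1 θ.2, mul_one, Real.norm_eq_abs, abs_of_pos s.2]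
  have hPB : ∀ s : Set.Ioi (0:ℝ),
      P (Metric.closedBall (0 : EuclideanSpace ℝ (Fin n)) r) s
        = if s ∈ K then Set.univ else (∅ : Set _) := by
    intro s
    ext θ
    by_cases h : s ∈ K
    · simp only [h, if_true, Set.mem_univ, iff_true, P, Set.mem_preimage,
        mem_closedBall_zero_iff, hnormsm s θ]
      exact h
    · simp only [h, if_false, Set.mem_empty_iff_false, iff_false, P, Set.mem_preimage,
        mem_closedBall_zero_iff, hnormsm s θ]
      exact h
  -- the three polar formulas
  have hAB : stdGaussian n (A ∩ Metric.closedBall 0 r)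
      = ∫⁻ s in K, σ (P A s) * g s ∂ν := by
    rw [stdGaussian_eq, stdGaussian_polar n hn _ (hSA.inter hSB), ← lintegral_indicator hKm]
    refine lintegral_congr fun s => ?_
    have : P (A ∩ Metric.closedBall 0 r) s = P A s ∩ P (Metric.closedBall 0 r) s :=
      Set.preimage_inter
    show σ (P (A ∩ Metric.closedBall 0 r) s) * g s = _
    rw [this, hPB s]
    by_cases h : s ∈ K
    · simp [h]
    · simp [h]
  have hBB : stdGaussian n (Metric.closedBall 0 r)
      = ∫⁻ s in K, σ Set.univ * g s ∂ν := by
    rw [stdGaussian_eq, stdGaussian_polar n hn _ hSB, ← lintegral_indicator hKm]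
    refine lintegral_congr fun s => ?_
    show σ (P (Metric.closedBall 0 r) s) * g s = _
    rw [hPB s]
    by_cases h : s ∈ K
    · simp [h]
    · simp [h]
  have hAA : stdGaussian n A = (∫⁻ s in K, σ (P A s) * g s ∂ν)
      + ∫⁻ s in Kᶜ, σ (P A s) * g s ∂ν := by
    rw [stdGaussian_eq, stdGaussian_polar n hn _ hSA, lintegral_add_compl _ hKm]
  have htotal : (∫⁻ s in K, σ Set.univ * g s ∂ν) + (∫⁻ s in Kᶜ, σ Set.univ * g s ∂ν) = 1 := by
    rw [lintegral_add_compl _ hKm]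
    have : ∫⁻ s, σ Set.univ * g s ∂ν = stdGaussian n Set.univ := by
      rw [stdGaussian_eq, stdGaussian_polar n hn _ MeasurableSet.univ]
      exact lintegral_congr fun s => by rw [Set.preimage_univ]
    rw [this, stdGaussian_univ]
  -- constants
  set c0 : ENNReal := σ (P A ⟨r, hr⟩) with hc0
  have hbound1 : ∀ s ∈ K, c0 ≤ σ (P A s) :=
    fun s hs => measure_mono (preimage_smul_sphere_antitone n A hAco h0 s ⟨r, hr⟩ hs)
  have hbound2 : ∀ s ∈ Kᶜ, σ (P A s) ≤ c0 :=
    fun s hs => measure_mono (preimage_smul_sphere_antitone n A hAco h0 ⟨r, hr⟩ s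
      (le_of_lt (not_le.1 hs)))
  set L := ∫⁻ s in K, σ (P A s) * g s ∂ν with hL
  set L' := ∫⁻ s in Kᶜ, σ (P A s) * g s ∂ν with hL'
  set Q := ∫⁻ s in K, σ Set.univ * g s ∂ν with hQ
  set Q' := ∫⁻ s in Kᶜ, σ Set.univ * g s ∂ν with hQ'
  set G := ∫⁻ s in K, g s ∂ν with hG
  set G' := ∫⁻ s in Kᶜ, g s ∂ν with hG'
  have hLge : c0 * G ≤ L := by
    rw [hL, hG, ← lintegral_const_mul _ hgm]
    exact setLIntegral_mono' hKm fun s hs => mul_le_mul_left (hbound1 s hs) _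
  have hL'le : L' ≤ c0 * G' := by
    rw [hL', hG', ← lintegral_const_mul _ hgm]
    exact setLIntegral_mono' hKm.compl fun s hs => mul_le_mul_left (hbound2 s hs) _
  have hQeq : Q = σ Set.univ * G := by rw [hQ, hG, ← lintegral_const_mul _ hgm]
  have hQ'eq : Q' = σ Set.univ * G' := by rw [hQ', hG', ← lintegral_const_mul _ hgm]
  have key : L' * Q ≤ L * Q' := by
    calc L' * Q ≤ (c0 * G') * (σ Set.univ * G) := by
          rw [hQeq]; exact mul_le_mul_left hL'le _
    _ = (c0 * G) * (σ Set.univ * G') := by ring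
    _ ≤ L * Q' := by rw [hQ'eq]; exact mul_le_mul_left hLge _
  rw [hAB, hAA, hBB]
  calc (L + L') * Q = L * Q + L' * Q := by rw [add_mul]
    _ ≤ L * Q + L * Q' := add_le_add_right key _
    _ = L * (Q + Q') := by rw [mul_add]
    _ = L := by rw [htotal, mul_one]
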